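/- arXiv:1509.00255 — 2 statements merged into one kernel-verified Lean document; each statement's English description precedes it below -/
import Mathlib

section
/- For every rational r = p/q in lowest terms with 0 < r < 1, there exist exactly q distinct cyclically balanced binary words of length q containing exactly p ones. -/
open Filter Topology

/-- The space of one-sided binary sequences. -/
abbrev Sigma2 := ℕ → Bool

/-- The one-sided shift map. -/
def shift (x : Sigma2) : Sigma2 := fun n => x (n + 1)

/-- Strict lexicographic order on sequences. -/
def lexLt (x y : Sigma2) : Prop := ∃ k, (∀ i < k, x i = y i) ∧ x k < y k

/-- Lexicographic order on sequences. -/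
def lexLe (x y : Sigma2) : Prop := x = y ∨ lexLt x y

open Classical in
/-- The metric on `Sigma2`: `2^{-j}` where `j` is the (1-indexed) first disagreement. -/
noncomputable def dS (x y : Sigma2) : ℝ :=
  if x = y then 0 else (2 : ℝ)⁻¹ ^ (sInf {i | x i ≠ y i} + 1)

/-- Product metric on `Sigma2 × Sigma2`. -/
noncomputable def d2 (p q : Sigma2 × Sigma2) : ℝ :=
  Real.sqrt (dS p.1 q.1 ^ 2 + dS p.2 q.2 ^ 2)

/-- Number of 1's in a word. -/
def ones (w : List Bool) : ℕ := w.count true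

/-- A word is balanced if any two factors of the same length (≥ 2) have numbers of 1's
differing by at most one. -/
def BalancedWord (w : List Bool) : Prop :=
  ∀ u v : List Bool, u <:+: w → v <:+: w → u.length = v.length →
    2 ≤ u.length → ((ones u : ℤ) - ones v).natAbs ≤ 1

/-- A word is cyclically balanced if its square is balanced. -/
def CycBalanced (w : List Bool) : Prop := BalancedWord (w ++ w)

/-- The periodic sequence `w^∞`. -/
def perSeq (w : List Bool) : Sigma2 := fun n => w.getD (n % w.length) false

/-- The sequence `w x` obtained by prepending the word `w` to the sequence `x`. -/
def wordSeq (w : List Bool) (x : Sigma2) : Sigma2 :=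
  fun n => if n < w.length then w.getD n false else x (n - w.length)

/-- A Parry sequence: starts with 1 and dominates all its shifts. -/
def Parry (α : Sigma2) : Prop := α 0 = true ∧ ∀ n, lexLe (shift^[n] α) α

/-- An admissible pair in the lexicographic world. -/
def Admissible (α β : Sigma2) : Prop :=
  Parry α ∧ Parry (fun n => !β n) ∧
    ∀ n, lexLe β (shift^[n] α) ∧ lexLe (shift^[n] β) α

/-- The lexicographic subshift `Σ_(α,β)`. -/
def lexSubshift (α β : Sigma2) : Set Sigma2 :=
  {x | ∀ n, lexLe β (shift^[n] x) ∧ lexLe (shift^[n] x) α}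

/-- Sum of lengths of the first `m` blocks. -/
def blockSum (b : ℕ → List Bool) (m : ℕ) : ℕ := ∑ i ∈ Finset.range m, (b i).length

/-- The infinite concatenation of a sequence of blocks. -/
noncomputable def flatten (b : ℕ → List Bool) : Sigma2 :=
  fun n => (b (sInf {m | n < blockSum b (m + 1)})).getD
    (n - blockSum b (sInf {m | n < blockSum b (m + 1)})) false

/-- The substitution `0 ↦ w0`, `1 ↦ w1` acting on sequences. -/
noncomputable def subst (w0 w1 : List Bool) (x : Sigma2) : Sigma2 :=
  flatten (fun i => if x i = true then w1 else w0)

/-- The renewal system `{ω,ν}^∞`: all infinite free concatenations of `ω` and `ν`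
together with their shifts. -/
def Renewal (ω ν : List Bool) : Set Sigma2 :=
  {x | ∃ (b : ℕ → List Bool) (k : ℕ), (∀ i, b i = ω ∨ b i = ν) ∧ x = shift^[k] (flatten b)}

/-- Number of words of length `n` occurring in sequences of `X`. -/
noncomputable def wordCount (X : Set Sigma2) (n : ℕ) : ℕ :=
  Set.ncard {w : List Bool | w.length = n ∧
    ∃ x ∈ X, ∃ k, w = List.ofFn (fun i : Fin n => x (k + i))}

/-- Topological entropy of a subshift, via exponential growth of word counts
(base-`e` logarithm). -/
noncomputable def entropy (X : Set Sigma2) : ℝ :=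
  Filter.limsup (fun n => Real.log (wordCount X n) / n) Filter.atTop

/-- The subshift avoiding a set of forbidden words. -/
def forbids (F : Set (List Bool)) : Set Sigma2 :=
  {x | ∀ w ∈ F, ∀ k, w ≠ List.ofFn (fun i : Fin w.length => x (k + i))}

/-- A subshift of finite type. -/
def IsSFT (X : Set Sigma2) : Prop := ∃ F : Finset (List Bool), X = forbids ↑F

/-- Cyclic rotation of a word. -/
def rot (w : List Bool) (k : ℕ) : List Bool := w.drop k ++ w.take k

/-- `w` is the lexicographically largest cyclic permutation of itself starting with 0. -/
def ZeroMaxWord (w : List Bool) : Prop :=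
  w ≠ [] ∧ w.headI = false ∧
    ∀ k < w.length, (rot w k).headI = false → lexLe (perSeq (rot w k)) (perSeq w)

/-- `w` is the lexicographically smallest cyclic permutation of itself starting with 1. -/
def OneMinWord (w : List Bool) : Prop :=
  w ≠ [] ∧ w.headI = true ∧
    ∀ k < w.length, (rot w k).headI = true → lexLe (perSeq w) (perSeq (rot w k))

/-- The combinatorial conditions on the words of an associated pair of a renormalisation. -/
def AssocWords (ω ν : List Bool) : Prop :=
  ZeroMaxWord ω ∧ OneMinWord ν ∧
  (∀ k < ν.length, (rot ν k).headI = false → lexLt (perSeq (rot ν k)) (perSeq ω)) ∧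
  (∀ k < ω.length, (rot ω k).headI = true → lexLt (perSeq ν) (perSeq (rot ω k))) ∧
  3 ≤ ω.length + ν.length

/-- `(α,β)` is renormalisable by the words `ω`, `ν`: both `0α` and `1β` are infinite free
concatenations of `ω` and `ν`, starting with `ω` resp. `ν`. -/
def RenormalisableBy (α β : Sigma2) (ω ν : List Bool) : Prop :=
  AssocWords ω ν ∧
  (∃ b : ℕ → List Bool, b 0 = ω ∧ (∀ i, b i = ω ∨ b i = ν) ∧ wordSeq [false] α = flatten b) ∧
  (∃ b : ℕ → List Bool, b 0 = ν ∧ (∀ i, b i = ω ∨ b i = ν) ∧ wordSeq [true] β = flatten b)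

def Renormalisable (α β : Sigma2) : Prop := ∃ ω ν, RenormalisableBy α β ω ν

def PeriodicSeq (x : Sigma2) : Prop := ∃ k, 1 ≤ k ∧ ∀ n, x (n + k) = x n

/-- An essential pair: admissible, not renormalisable, both coordinates periodic. -/
def EssentialPair (α β : Sigma2) : Prop :=
  Admissible α β ∧ ¬ Renormalisable α β ∧ PeriodicSeq α ∧ PeriodicSeq β

/-- `(ω,ν)` is the associated pair of some essential pair `(α,β)`,
i.e. `0α = ω^∞` and `1β = ν^∞`. -/
def AssociatedOfEssential (ω ν : List Bool) : Prop :=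
  ∃ α β : Sigma2, EssentialPair α β ∧ AssocWords ω ν ∧
    wordSeq [false] α = perSeq ω ∧ wordSeq [true] β = perSeq ν

/-- The product of lexicographic intervals `[ω^∞, ων^∞] × [νω^∞, ν^∞]`
(in the `(0α,1β)` coordinates). -/
def B0set (ω ν : List Bool) : Set (Sigma2 × Sigma2) :=
  {p | lexLe (perSeq ω) p.1 ∧ lexLe p.1 (wordSeq ω (perSeq ν)) ∧
       lexLe (wordSeq ν (perSeq ω)) p.2 ∧ lexLe p.2 (perSeq ν)}

/-- The 0-renormalisation box `B⁰(ω,ν)`: admissible pairs `(α,β)` with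
`(0α,1β)` in the corresponding product of lexicographic intervals. -/
def B0Box (ω ν : List Bool) : Set (Sigma2 × Sigma2) :=
  {q | Admissible q.1 q.2 ∧ (wordSeq [false] q.1, wordSeq [true] q.2) ∈ B0set ω ν}

/-- Composition of a list of substitutions (head applied last). -/
noncomputable def compSub : List (List Bool × List Bool) → Sigma2 → Sigma2
  | [], x => x
  | p :: l, x => subst p.1 p.2 (compSub l x)

/-- `w = ξ_r`: the lexicographically largest cyclically balanced word of length `q`
with `p` ones starting with `0`, for `r = p/q`. -/
def IsXi (r : ℚ) (w : List Bool) : Prop :=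
  w.length = r.den ∧ (ones w : ℤ) = r.num ∧ CycBalanced w ∧ w.headI = false ∧
  ∀ v : List Bool, v.length = r.den → (ones v : ℤ) = r.num → CycBalanced v →
    v.headI = false → lexLe (perSeq v) (perSeq w)

/-- `w = ζ_r`: the lexicographically smallest cyclically balanced word of length `q`
with `p` ones starting with `1`, for `r = p/q`. -/
def IsZeta (r : ℚ) (w : List Bool) : Prop :=
  w.length = r.den ∧ (ones w : ℤ) = r.num ∧ CycBalanced w ∧ w.headI = true ∧
  ∀ v : List Bool, v.length = r.den → (ones v : ℤ) = r.num → CycBalanced v →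
    v.headI = true → lexLe (perSeq w) (perSeq v)

/-- The `n`-renormalisation box, given the list of substitution word pairs
`[(ξ_{r_n},ζ_{r_n}),…,(ξ_{r_1},ζ_{r_1})]`. -/
def BoxN (ps : List (List Bool × List Bool)) (ω ν : List Bool) : Set (Sigma2 × Sigma2) :=
  {q | Admissible q.1 q.2 ∧ ∃ p ∈ B0set ω ν,
    wordSeq [false] q.1 = compSub ps p.1 ∧ wordSeq [true] q.2 = compSub ps p.2}

/-- Closure of the orbit of a point under the shift. -/
def orbitClosure (x : Sigma2) : Set Sigma2 := closure {y | ∃ n, y = shift^[n] x}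

/-- A closed, completely invariant subset of the subshift `X`. -/
def InvClosed (X A : Set Sigma2) : Prop :=
  IsClosed A ∧ A ⊆ X ∧ shift '' A = A ∧ {x ∈ X | shift x ∈ A} = A

/-- The shift is topologically transitive on `A`. -/
def TransOn (A : Set Sigma2) : Prop :=
  ∀ U V : Set Sigma2, IsOpen U → IsOpen V → (U ∩ A).Nonempty → (V ∩ A).Nonempty →
    ∃ n, ((shift^[n]) '' (U ∩ A) ∩ V).Nonempty

/-- A transitive component of the subshift `X`: closed, completely invariant, topologically
transitive, and maximal among such sets containing a dense orbit. -/
def TransComp (X A : Set Sigma2) : Prop :=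
  InvClosed X A ∧ TransOn A ∧
    ∀ A', InvClosed X A' → (∃ x ∈ A', A' ⊆ orbitClosure x) → A ⊆ A' → A' = A

namespace Stmt1Aux

/-- The rotated lower mechanical word with phase `c`. -/
def Wd (p q c : ℕ) : List Bool := List.ofFn (fun i : Fin q => decide (q - p ≤ (i * p + c) % q))

lemma length_Wd (p q c : ℕ) : (Wd p q c).length = q := by simp [Wd]

lemma getD_double {w : List Bool} {i : ℕ} (hi : i < w.length) :
    (w ++ w).getD (i + w.length) false = w.getD i false := by
  rw [List.getD_append_right _ _ _ _ (by omega)]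
  congr 1; omega

lemma getD_left {w v : List Bool} {i : ℕ} (hi : i < w.length) :
    (w ++ v).getD i false = w.getD i false := by
  rw [List.getD_append _ _ _ _ hi]

lemma ones_take_succ (l : List Bool) (k : ℕ) (hk : k < l.length) :
    ones (l.take (k + 1)) = ones (l.take k) + (if l.getD k false = true then 1 else 0) := by
  rw [List.take_succ]
  unfold ones
  rw [List.count_append]
  congr 1
  rw [List.getElem?_eq_getElem hk]
  rw [List.getD_eq_getElem _ _ hk]
  cases l[k] <;> simp

lemma ones_take_add (l : List Bool) (k n : ℕ) (h : k + n ≤ l.length) :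
    ones (l.take (k + n)) = ones (l.take k)
      + ∑ j ∈ Finset.range n, (if l.getD (k + j) false = true then 1 else 0) := by
  induction n with
  | zero => simp
  | succ n ih =>
    rw [← Nat.add_assoc, ones_take_succ l (k + n) (by omega), ih (by omega),
      Finset.sum_range_succ]
    omega

lemma seg_infix (l : List Bool) (k n : ℕ) : (l.drop k).take n <:+: l :=
  ⟨l.take k, (l.drop k).drop n, by
    rw [List.append_assoc, List.take_append_drop, List.take_append_drop]⟩

lemma ones_seg (l : List Bool) (k n : ℕ) (h : k + n ≤ l.length) :
    ones ((l.drop k).take n)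
      = ∑ j ∈ Finset.range n, (if l.getD (k + j) false = true then 1 else 0) := by
  have h1 := ones_take_add l k n h
  rw [List.take_add] at h1
  unfold ones at *
  rw [List.count_append] at h1
  omega

lemma seg_length (l : List Bool) (k n : ℕ) (h : k + n ≤ l.length) :
    ((l.drop k).take n).length = n := by
  simp; omega


variable {p q : ℕ}

lemma getD_Wd (c : ℕ) {i : ℕ} (hi : i < q) :
    (Wd p q c).getD i false = decide (q - p ≤ (i * p + c) % q) := by
  rw [List.getD_eq_getElem _ _ (by rw [length_Wd]; exact hi)]
  simp [Wd]

/-- getD of the doubled word, valid for all `m < 2q`. -/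
lemma getD_Wd2 (c : ℕ) {m : ℕ} (hm : m < 2 * q) :
    (Wd p q c ++ Wd p q c).getD m false = decide (q - p ≤ (m * p + c) % q) := by
  rcases Nat.lt_or_ge m q with h | h
  · rw [getD_left (by rw [length_Wd]; exact h), getD_Wd c h]
  · have h2 : m - q < q := by omega
    have hd := getD_double (w := Wd p q c) (i := m - q) (by rw [length_Wd]; exact h2)
    rw [length_Wd] at hd
    rw [show m - q + q = m by omega] at hd
    rw [hd, getD_Wd c h2]
    have key : ((m - q) * p + c) % q = (m * p + c) % q := by
      have hcm : p * q = q * p := Nat.mul_comm p q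
      have h3 : (m - q) * p + q * p = m * p := by rw [← Nat.add_mul]; congr 1; omega
      have hmp : m * p + c = ((m - q) * p + c) + p * q := by omega
      rw [hmp, Nat.add_mul_mod_self_right]
    rw [key]

lemma fcount_Wd (hp : 0 < p) (hpq : p < q) (c : ℕ) (hc : c < q) {m : ℕ} (hm : m ≤ 2 * q) :
    ones ((Wd p q c ++ Wd p q c).take m) = (m * p + c) / q := by
  induction m with
  | zero => simp [ones, Nat.div_eq_of_lt hc]
  | succ m ih =>
    have hq : 0 < q := by omega
    rw [ones_take_succ _ m (by simp [length_Wd]; omega), ih (by omega), getD_Wd2 c (by omega)]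
    have h2 : (m + 1) * p + c = (m * p + c) + p := by ring
    have harith : (m * p + c + p) / q
        = (m * p + c) / q + if q - p ≤ (m * p + c) % q then 1 else 0 := by
      rw [Nat.add_div hq, Nat.div_eq_of_lt hpq, Nat.mod_eq_of_lt hpq]
      split <;> split <;> omega
    rw [h2, harith]
    by_cases hcc : q - p ≤ (m * p + c) % q <;> simp [hcc]

lemma ones_Wd (hp : 0 < p) (hpq : p < q) (c : ℕ) (hc : c < q) : ones (Wd p q c) = p := by
  have h := fcount_Wd hp hpq c hc (m := q) (by omega)
  rw [List.take_left' (length_Wd p q c)] at h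
  rw [h, Nat.mul_add_div (by omega), Nat.div_eq_of_lt hc, Nat.add_zero]

lemma ones_infix_Wd (hp : 0 < p) (hpq : p < q) (c : ℕ) (hc : c < q) {u : List Bool}
    (hu : u <:+: Wd p q c ++ Wd p q c) :
    (u.length * p) / q ≤ ones u ∧ ones u ≤ (u.length * p) / q + 1 := by
  obtain ⟨s, t, hst⟩ := hu
  have hq : 0 < q := by omega
  have hlen : (Wd p q c ++ Wd p q c).length = 2 * q := by
    rw [List.length_append, length_Wd]; omega
  have hslen : s.length + u.length ≤ 2 * q := by
    have h := congrArg List.length hst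
    rw [hlen] at h
    simp only [List.length_append] at h
    omega
  have h1 : ones ((Wd p q c ++ Wd p q c).take (s.length + u.length)) = ones s + ones u := by
    rw [← hst, List.take_left' (List.length_append : (s ++ u).length = _)]
    simp [ones, List.count_append]
  have h2 : ones ((Wd p q c ++ Wd p q c).take s.length) = ones s := by
    rw [← hst, List.append_assoc, List.take_left]
  rw [fcount_Wd hp hpq c hc (by omega)] at h1
  rw [fcount_Wd hp hpq c hc (by omega)] at h2
  have hd := Nat.add_div hq (a := s.length * p + c) (b := u.length * p)
  have he : (s.length + u.length) * p + c = (s.length * p + c) + u.length * p := by ring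
  rw [he] at h1
  split at hd <;> omega

lemma cycBalanced_Wd (hp : 0 < p) (hpq : p < q) (c : ℕ) (hc : c < q) :
    CycBalanced (Wd p q c) := by
  intro u v hu hv huv _
  obtain ⟨hu1, hu2⟩ := ones_infix_Wd hp hpq c hc hu
  obtain ⟨hv1, hv2⟩ := ones_infix_Wd hp hpq c hc hv
  rw [huv] at hu1 hu2
  omega


variable {p q : ℕ}

lemma inj_Wd_aux (hp : 0 < p) (hpq : p < q) (hco : Nat.Coprime p q)
    {c c' : ℕ} (hc : c < q) (hc' : c' < q) (hlt : c < c') : Wd p q c ≠ Wd p q c' := by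
  intro heq
  haveI : NeZero q := ⟨by omega⟩
  have hq : 0 < q := by omega
  -- find m < q with q ∣ m * p + c'
  set u : (ZMod q)ˣ := ZMod.unitOfCoprime p hco with hu
  set m : ℕ := ((-(c' : ZMod q)) * ((u⁻¹ : (ZMod q)ˣ) : ZMod q)).val with hm
  have hmq : m < q := ZMod.val_lt _
  have hdvd : q ∣ m * p + c' := by
    have h1 : ((m * p + c' : ℕ) : ZMod q) = 0 := by
      push_cast
      rw [hm, ZMod.natCast_val, ZMod.cast_id]
      have hup : ((u : (ZMod q)ˣ) : ZMod q) = (p : ZMod q) := ZMod.coe_unitOfCoprime p hco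
      rw [← hup]
      have : ((u⁻¹ : (ZMod q)ˣ) : ZMod q) * ((u : (ZMod q)ˣ) : ZMod q) = 1 := by
        rw [← Units.val_mul, inv_mul_cancel, Units.val_one]
      rw [mul_assoc, this, mul_one]
      ring
    exact (ZMod.natCast_eq_zero_iff _ _).mp h1
  obtain ⟨s, hs⟩ := hdvd
  have hs1 : 1 ≤ s := by nlinarith [hs]
  -- equal prefixes give equal division values
  have hfc : (m * p + c) / q = (m * p + c') / q := by
    have h1 := fcount_Wd hp hpq c hc (m := m) (by omega)
    have h2 := fcount_Wd hp hpq c' hc' (m := m) (by omega)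
    rw [heq] at h1
    omega
  have hdiv' : (m * p + c') / q = s := by rw [hs, Nat.mul_div_cancel_left _ hq]
  have hdiv : (m * p + c) / q < s := by
    rw [Nat.div_lt_iff_lt_mul hq]
    have : m * p + c < m * p + c' := by omega
    nlinarith [hs]
  omega

lemma inj_Wd (hp : 0 < p) (hpq : p < q) (hco : Nat.Coprime p q)
    {c c' : ℕ} (hc : c < q) (hc' : c' < q) (heq : Wd p q c = Wd p q c') : c = c' := by
  rcases lt_trichotomy c c' with h | h | h
  · exact absurd heq (inj_Wd_aux hp hpq hco hc hc' h)
  · exact h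
  · exact absurd heq.symm (inj_Wd_aux hp hpq hco hc' hc h)


variable {p q : ℕ}

/-- indicator of a 1 at position k -/
def df (l : List Bool) (k : ℕ) : ℕ := if l.getD k false = true then 1 else 0

/-- the discrepancy function -/
def Gf (p q : ℕ) (l : List Bool) (k : ℕ) : ℤ := (q : ℤ) * ones (l.take k) - k * p

lemma surj_Wd (hp : 0 < p) (hpq : p < q) {w : List Bool}
    (hlen : w.length = q) (hones : ones w = p) (hbal : CycBalanced w) :
    ∃ c < q, w = Wd p q c := by
  have hq : 0 < q := by omega
  set l := w ++ w with hldef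
  have hbalL : BalancedWord l := by rw [hldef]; exact hbal
  have hllen : l.length = 2 * q := by rw [hldef, List.length_append, hlen]; omega
  have hf0 : ones (l.take 0) = 0 := by simp [ones]
  have hfq : ones (l.take q) = p := by
    rw [hldef, List.take_left' hlen]; exact hones
  have hfsum : ∀ k n, k + n ≤ 2 * q →
      ones (l.take (k + n)) = ones (l.take k) + ∑ j ∈ Finset.range n, df l (k + j) :=
    fun k n h => ones_take_add l k n (by omega)
  have hseg : ∀ k n, k + n ≤ 2 * q →
      ones ((l.drop k).take n) = ∑ j ∈ Finset.range n, df l (k + j) :=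
    fun k n h => ones_seg l k n (by omega)
  have hgd : ∀ j, j < q → l.getD j false = w.getD j false := by
    intro j hj
    rw [hldef]; exact getD_left (by omega)
  have hgd2 : ∀ j, j < q → l.getD (j + q) false = w.getD j false := by
    intro j hj
    rw [hldef, show j + q = j + w.length by rw [hlen]]
    exact getD_double (by omega)
  have hdper : ∀ j, j < q → df l (j + q) = df l j := by
    intro j hj
    simp only [df, hgd j hj, hgd2 j hj]
  -- window sums of length q all equal p
  have hwin : ∀ j, j ≤ q → ∑ k ∈ Finset.range q, df l (k + j) = p := by
    intro j
    induction j with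
    | zero =>
      intro _
      have h := hfsum 0 q (by omega)
      simp only [Nat.zero_add] at h
      simp only [Nat.add_zero]
      omega
    | succ j ih =>
      intro hj
      have hih := ih (by omega)
      have e1 : ∑ k ∈ Finset.range (q + 1), df l (k + j)
          = (∑ k ∈ Finset.range q, df l (k + (j + 1))) + df l (0 + j) := by
        rw [Finset.sum_range_succ']
        congr 1
        apply Finset.sum_congr rfl
        intro k _
        congr 1
        omega
      have e2 : ∑ k ∈ Finset.range (q + 1), df l (k + j)
          = (∑ k ∈ Finset.range q, df l (k + j)) + df l (q + j) := Finset.sum_range_succ _ _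
      have e3 : df l (q + j) = df l j := by
        rw [show q + j = j + q by omega]
        exact hdper j (by omega)
      have e4 : df l (0 + j) = df l j := by rw [Nat.zero_add]
      omega
  -- averaging
  have havg : ∀ n, n ≤ q →
      ∑ k ∈ Finset.range q, (∑ j ∈ Finset.range n, df l (k + j)) = n * p := by
    intro n hn
    rw [Finset.sum_comm]
    rw [Finset.sum_congr rfl (fun j hj => hwin j (by
      have := Finset.mem_range.mp hj; omega))]
    rw [Finset.sum_const, Finset.card_range, smul_eq_mul]
  -- pairwise balance of window sums
  have hpair : ∀ n, n ≤ q → ∀ k1 k2, k1 + n ≤ 2 * q → k2 + n ≤ 2 * q →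
      (∑ j ∈ Finset.range n, df l (k1 + j)) ≤ (∑ j ∈ Finset.range n, df l (k2 + j)) + 1 := by
    intro n hn k1 k2 h1 h2
    rcases Nat.lt_or_ge n 2 with h | h
    · have b1 : ∑ j ∈ Finset.range n, df l (k1 + j) ≤ n := by
        calc ∑ j ∈ Finset.range n, df l (k1 + j) ≤ ∑ _j ∈ Finset.range n, 1 :=
              Finset.sum_le_sum (fun i _ => by unfold df; split <;> omega)
          _ = n := by simp
      omega
    · have hb := hbalL ((l.drop k1).take n) ((l.drop k2).take n) (seg_infix l k1 n)
        (seg_infix l k2 n)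
        (by rw [seg_length l k1 n (by omega), seg_length l k2 n (by omega)])
        (by rw [seg_length l k1 n (by omega)]; omega)
      rw [hseg k1 n h1, hseg k2 n h2] at hb
      omega
  -- the discrepancy bound
  have hG : ∀ j k, j ≤ q → k ≤ q → Gf p q l k - Gf p q l j ≤ (q : ℤ) - 1 := by
    have main : ∀ j k, j ≤ k → k ≤ q → Gf p q l k - Gf p q l j ≤ (q : ℤ) - 1 ∧
        Gf p q l j - Gf p q l k ≤ (q : ℤ) - 1 := by
      intro j k hjk hk
      obtain ⟨n, hkj⟩ : ∃ n, k = j + n := ⟨k - j, by omega⟩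
      subst hkj
      set S : ℕ → ℕ := fun m => ∑ x ∈ Finset.range n, df l (m + x) with hS
      have hfn : ones (l.take (j + n)) = ones (l.take j) + S j :=
        hfsum j n (by omega)
      have hexp : Gf p q l (j + n) - Gf p q l j = (q : ℤ) * (S j : ℤ) - (n : ℤ) * p := by
        simp only [Gf]
        rw [hfn]
        push_cast
        ring
      rcases Nat.eq_zero_or_pos n with h0 | h0
      · subst h0
        have hS0 : S j = 0 := by simp [hS]
        rw [hexp, hS0]
        norm_num
        omega
      · have hjq : j < q := by omega
        have hc : ∑ i ∈ Finset.range q, S i = n * p := havg n (by omega)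
        have hsum : ∑ i ∈ Finset.range q, ((S j : ℤ) - (S i : ℤ))
            = (q : ℤ) * (S j : ℤ) - (n : ℤ) * p := by
          rw [Finset.sum_sub_distrib, Finset.sum_const, Finset.card_range, nsmul_eq_mul,
            ← Nat.cast_sum, hc]
          push_cast
          ring
        have hterm : ∀ i ∈ Finset.range q,
            ((S j : ℤ) - (S i : ℤ)) ≤ 1 ∧ (-1 : ℤ) ≤ ((S j : ℤ) - (S i : ℤ)) := by
          intro i hi
          have hiq := Finset.mem_range.mp hi
          have p1 : S j ≤ S i + 1 := hpair n (by omega) j i (by omega) (by omega)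
          have p2 : S i ≤ S j + 1 := hpair n (by omega) i j (by omega) (by omega)
          constructor <;> omega
        have hjmem : j ∈ Finset.range q := Finset.mem_range.mpr hjq
        have hsplit := (Finset.add_sum_erase (Finset.range q)
          (fun i => ((S j : ℤ) - (S i : ℤ))) hjmem).symm
        have hcard : ((Finset.range q).erase j).card = q - 1 := by
          rw [Finset.card_erase_of_mem hjmem, Finset.card_range]
        have hcast : ((q - 1 : ℕ) : ℤ) = (q : ℤ) - 1 := by omega
        have hub : ∑ i ∈ (Finset.range q).erase j, ((S j : ℤ) - (S i : ℤ)) ≤ (q : ℤ) - 1 := by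
          have h1 := Finset.sum_le_card_nsmul ((Finset.range q).erase j)
            (fun i => ((S j : ℤ) - (S i : ℤ))) 1
            (fun i hi => (hterm i (Finset.mem_of_mem_erase hi)).1)
          rw [hcard, nsmul_eq_mul, mul_one, hcast] at h1
          exact h1
        have hlb : -((q : ℤ) - 1) ≤ ∑ i ∈ (Finset.range q).erase j, ((S j : ℤ) - (S i : ℤ)) := by
          have h1 := Finset.card_nsmul_le_sum ((Finset.range q).erase j)
            (fun i => ((S j : ℤ) - (S i : ℤ))) (-1)
            (fun i hi => (hterm i (Finset.mem_of_mem_erase hi)).2)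
          rw [hcard, nsmul_eq_mul, hcast] at h1
          have e : ((q : ℤ) - 1) * (-1) = -((q : ℤ) - 1) := by ring
          rw [e] at h1
          exact h1
        have hdiff : Gf p q l (j + n) - Gf p q l j
            = ∑ i ∈ (Finset.range q).erase j, ((S j : ℤ) - (S i : ℤ)) := by
          rw [hexp, ← hsum, hsplit]
          simp
        constructor
        · rw [hdiff]; exact hub
        · have : -(Gf p q l (j + n) - Gf p q l j) ≤ (q : ℤ) - 1 := by
            rw [hdiff]
            omega
          omega
    intro j k hj hk
    rcases le_or_gt j k with h | h
    · exact (main j k h hk).1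
    · exact (main k j (by omega) hj).2
  -- the minimum of Gf
  have hTne : ((Finset.range (q + 1)).image (Gf p q l)).Nonempty :=
    ⟨Gf p q l 0, Finset.mem_image_of_mem _ (Finset.mem_range.mpr (by omega))⟩
  set t := ((Finset.range (q + 1)).image (Gf p q l)).min' hTne with ht
  have htle : ∀ k, k ≤ q → t ≤ Gf p q l k := by
    intro k hk
    exact Finset.min'_le _ _ (Finset.mem_image_of_mem _ (Finset.mem_range.mpr (by omega)))
  have htub : ∀ k, k ≤ q → Gf p q l k ≤ t + ((q : ℤ) - 1) := by
    intro k hk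
    obtain ⟨k0, hk0, hGk0⟩ : ∃ k0, k0 ≤ q ∧ Gf p q l k0 = t := by
      have hmem := ((Finset.range (q + 1)).image (Gf p q l)).min'_mem hTne
      rw [Finset.mem_image] at hmem
      obtain ⟨k0, h1, h2⟩ := hmem
      exact ⟨k0, by have := Finset.mem_range.mp h1; omega, h2⟩
    have := hG k0 k hk0 hk
    omega
  have hG0 : Gf p q l 0 = 0 := by simp [Gf, ones]
  have ht0 : t ≤ 0 := by have := htle 0 (by omega); omega
  have htlb : -((q : ℤ) - 1) ≤ t := by have := htub 0 (by omega); omega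
  refine ⟨(t + q - 1).toNat, by omega, ?_⟩
  set c := (t + q - 1).toNat with hcdef
  have hcz : (c : ℤ) = t + q - 1 := by omega
  have hcq : c < q := by omega
  -- step relation
  have hstep : ∀ i, i < q → Gf p q l (i + 1) = Gf p q l i + q * df l i - p := by
    intro i hi
    have h1 : ones (l.take (i + 1)) = ones (l.take i) + df l i := by
      have h := hfsum i 1 (by omega)
      rw [Finset.sum_range_one, Nat.add_zero] at h
      exact h
    simp only [Gf]
    rw [h1]
    push_cast
    ring
  -- conclusion
  apply List.ext_getElem (by rw [hlen, length_Wd])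
  intro i h1 h2
  have hiq : i < q := by omega
  have hWd : (Wd p q c)[i] = decide (q - p ≤ (i * p + c) % q) := by
    simp [Wd]
  have hdfi : df l i = if w[i] = true then 1 else 0 := by
    rw [df, hgd i hiq, List.getD_eq_getElem w false (by omega)]
  have hbu := htub i (by omega)
  have hbl := htle i (by omega)
  have hb1 := htle (i + 1) (by omega)
  have hb2 := htub (i + 1) (by omega)
  have hstepi := hstep i hiq
  -- the modular value
  obtain ⟨A, hA, hAz⟩ : ∃ A : ℕ, (i * p + c) % q = A ∧ (A : ℤ) = t + q - 1 - Gf p q l i := by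
    have hGi : Gf p q l i = (q : ℤ) * (ones (l.take i)) - (i : ℤ) * p := rfl
    have hkey : ((i * p + c : ℕ) : ℤ)
        = (t + q - 1 - Gf p q l i) + (q : ℤ) * (ones (l.take i)) := by
      push_cast
      omega
    have h2' : ((i * p + c : ℕ) : ℤ) % (q : ℤ) = t + q - 1 - Gf p q l i := by
      rw [hkey, Int.add_mul_emod_self_left]
      exact Int.emod_eq_of_lt (by omega) (by omega)
    have h3' : (((i * p + c) % q : ℕ) : ℤ) = ((i * p + c : ℕ) : ℤ) % (q : ℤ) := by
      push_cast
      ring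
    exact ⟨(i * p + c) % q, rfl, h3'.trans h2'⟩
  rw [hWd, hA]
  cases hwi : w[i] with
  | true =>
    rw [hwi, if_pos rfl] at hdfi
    rw [hdfi] at hstepi
    push_cast at hstepi
    refine (decide_eq_true ?_).symm
    omega
  | false =>
    rw [hwi] at hdfi
    simp only [Bool.false_eq_true, if_false] at hdfi
    rw [hdfi] at hstepi
    push_cast at hstepi
    refine (decide_eq_false ?_).symm
    omega

end Stmt1Aux

/-- for `r = p/q` in lowest terms, there are exactly `q` cyclically balanced
words of length `q` with `p` ones. -/

theorem stmt1 (p q : ℕ) (hp : 0 < p) (hpq : p < q) (hco : Nat.Coprime p q) :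
    Set.ncard {w : List Bool | w.length = q ∧ ones w = p ∧ CycBalanced w} = q := by
  classical
  have hset : {w : List Bool | w.length = q ∧ ones w = p ∧ CycBalanced w}
      = ↑((Finset.range q).image (Stmt1Aux.Wd p q)) := by
    ext w
    simp only [Set.mem_setOf_eq, Finset.coe_image, Set.mem_image, Finset.mem_coe,
      Finset.mem_range]
    constructor
    · rintro ⟨h1, h2, h3⟩
      obtain ⟨c, hc, heq⟩ := Stmt1Aux.surj_Wd hp hpq h1 h2 h3
      exact ⟨c, hc, heq.symm⟩
    · rintro ⟨c, hc, rfl⟩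
      exact ⟨Stmt1Aux.length_Wd p q c, Stmt1Aux.ones_Wd hp hpq c hc,
        Stmt1Aux.cycBalanced_Wd hp hpq c hc⟩
  rw [hset, Set.ncard_coe_finset, Finset.card_image_of_injOn, Finset.card_range]
  intro c hc c' hc' h
  exact Stmt1Aux.inj_Wd hp hpq hco (Finset.mem_range.mp hc) (Finset.mem_range.mp hc') h
end

section
/- Let α ∈ Σ₂ with α₁ = 1 and α not a Parry sequence, and let ς(α) = (α₁…α_{n_α−1}0)^∞ where n_α = min{n : σⁿ(α) ≽ α}. Then ς(α) is a Parry sequence and the one-sided lexicographic subshifts satisfy Σ_(0^∞, α) = Σ_(0^∞, ς(α)), i.e., {x : σⁿ(x) ≼ α ∀n} = {x : σⁿ(x) ≼ ς(α) ∀n}. -/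
open Filter Topology

/-- `n_α = min { n ≥ 1 : σⁿ(α) ≽ α }`. -/
noncomputable def nAlpha (α : Sigma2) : ℕ := sInf {n | 1 ≤ n ∧ lexLe α (shift^[n] α)}

/-- `ς(α) = (α₁ … α_{n_α - 1} 0)^∞`. -/
noncomputable def varsigma (α : Sigma2) : Sigma2 :=
  perSeq ((List.ofFn fun i : Fin (nAlpha α - 1) => α i) ++ [false])


/-! ### Auxiliary lemmas for stmt15 -/

private lemma shiftIter : ∀ (n : ℕ) (x : Sigma2) (m : ℕ), shift^[n] x m = x (m + n) := by
  intro n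
  induction n with
  | zero => intro x m; simp
  | succ n ih =>
    intro x m
    rw [Function.iterate_succ_apply, ih (shift x) m]
    rfl

private lemma boolLtIff : ∀ {a b : Bool}, a < b ↔ a = false ∧ b = true := by decide

private lemma lexLt_trans' {x y z : Sigma2} (h1 : lexLt x y) (h2 : lexLt y z) : lexLt x z := by
  obtain ⟨k1, a1, l1⟩ := h1
  obtain ⟨k2, a2, l2⟩ := h2
  rcases lt_trichotomy k1 k2 with h | h | h
  · exact ⟨k1, fun i hi => (a1 i hi).trans (a2 i (hi.trans h)), (a2 k1 h) ▸ l1⟩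
  · subst h; exact ⟨k1, fun i hi => (a1 i hi).trans (a2 i hi), lt_trans l1 l2⟩
  · exact ⟨k2, fun i hi => (a1 i (hi.trans h)).trans (a2 i hi), (a1 k2 h) ▸ l2⟩

private lemma lexLe_trans' {x y z : Sigma2} (h1 : lexLe x y) (h2 : lexLe y z) : lexLe x z := by
  rcases h1 with rfl | h1
  · exact h2
  · rcases h2 with rfl | h2
    · exact Or.inr h1
    · exact Or.inr (lexLt_trans' h1 h2)

private lemma lexLt_irrefl' {x : Sigma2} (h : lexLt x x) : False := by
  obtain ⟨k, _, l⟩ := h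
  exact lt_irrefl _ l

private lemma lexLt_not_lexLe {x y : Sigma2} (h : lexLt x y) (h' : lexLe y x) : False := by
  rcases h' with rfl | h'
  · exact lexLt_irrefl' h
  · exact lexLt_irrefl' (lexLt_trans' h h')

private lemma lexLt_of_not_lexLe {x y : Sigma2} (h : ¬ lexLe x y) : lexLt y x := by
  have hne : x ≠ y := fun he => h (Or.inl he)
  have hset : {i | x i ≠ y i}.Nonempty := by
    by_contra hc
    rw [Set.not_nonempty_iff_eq_empty] at hc
    refine hne (funext fun i => ?_)
    by_contra hi
    exact absurd (Set.mem_setOf_eq ▸ hi : i ∈ {i | x i ≠ y i}) (hc ▸ Set.notMem_empty i)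
  set k := sInf {i | x i ≠ y i} with hk
  have hkm : x k ≠ y k := Nat.sInf_mem hset
  have hag : ∀ i < k, x i = y i := by
    intro i hi
    by_contra hc
    exact (Nat.notMem_of_lt_sInf hi) hc
  have : x k < y k ∨ y k < x k := by
    rcases Bool.eq_false_or_eq_true (x k) with hx | hx <;>
      rcases Bool.eq_false_or_eq_true (y k) with hy | hy <;>
      simp [hx, hy] at hkm ⊢
  rcases this with hlt | hlt
  · exact absurd (Or.inr ⟨k, hag, hlt⟩) h
  · exact ⟨k, fun i hi => (hag i hi).symm, hlt⟩

private lemma lexLe_shiftN {x y : Sigma2} (n : ℕ) (h : lexLe x y) (hag : ∀ i < n, x i = y i) :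
    lexLe (fun t => x (t + n)) (fun t => y (t + n)) := by
  rcases h with rfl | ⟨k, ha, hl⟩
  · exact Or.inl rfl
  · have hkn : n ≤ k := by
      by_contra hc
      push_neg at hc
      rw [hag k hc] at hl
      exact lt_irrefl _ hl
    refine Or.inr ⟨k - n, fun i hi => ?_, ?_⟩
    · exact ha (i + n) (by omega)
    · show x (k - n + n) < y (k - n + n)
      rw [Nat.sub_add_cancel hkn]
      exact hl

/-- for `α` starting with 1 and not Parry, `ς(α)` is Parry and defines the
same one-sided lexicographic subshift. -/
theorem stmt15 (α : Sigma2) (h1 : α 0 = true) (h2 : ¬ Parry α) :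
    Parry (varsigma α) ∧
    {x : Sigma2 | ∀ n, lexLe (shift^[n] x) α} =
      {x : Sigma2 | ∀ n, lexLe (shift^[n] x) (varsigma α)} := by
  classical
  set N := nAlpha α with hNdef
  have hSne : {n | 1 ≤ n ∧ lexLe α (shift^[n] α)}.Nonempty := by
    simp only [Parry, not_and] at h2
    have h2' := h2 h1
    push_neg at h2'
    obtain ⟨n, hn⟩ := h2'
    have hn1 : 1 ≤ n := by
      rcases Nat.eq_zero_or_pos n with rfl | h
      · exact absurd (Or.inl rfl : lexLe (shift^[0] α) α) hn
      · exact h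
    exact ⟨n, hn1, Or.inr (lexLt_of_not_lexLe hn)⟩
  have hNmem : N ∈ {n | 1 ≤ n ∧ lexLe α (shift^[n] α)} := Nat.sInf_mem hSne
  have hN1 : 1 ≤ N := hNmem.1
  have hNle : lexLe α (shift^[N] α) := hNmem.2
  have hmin : ∀ n, 1 ≤ n → n < N → lexLt (shift^[n] α) α := by
    intro n h1n hn
    have hnm : n ∉ {n | 1 ≤ n ∧ lexLe α (shift^[n] α)} := Nat.notMem_of_lt_sInf hn
    have : ¬ lexLe α (shift^[n] α) := fun hc => hnm ⟨h1n, hc⟩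
    exact lexLt_of_not_lexLe this
  -- N ≥ 2
  have hN2 : 2 ≤ N := by
    by_contra hc
    have hN1' : N = 1 := by omega
    have hNle1 : lexLe α (shift^[1] α) := hN1' ▸ hNle
    have hal : ∀ n, α n = true := by
      rcases hNle1 with he | ⟨k, hag, hlt⟩
      · have hper : ∀ n, α n = true := by
          intro n
          induction n with
          | zero => exact h1
          | succ n ih =>
            have e : α (n + 1) = (shift^[1] α) n := (shiftIter 1 α n).symm
            rw [e, ← he]
            exact ih
        exact hper
      · exfalso
        have hkf : α k = false := by
          have := hlt
          rw [shiftIter] at this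
          exact (boolLtIff.mp this).1
        have htrue : ∀ i, i ≤ k → α i = true := by
          intro i hi
          induction i with
          | zero => exact h1
          | succ i ih =>
            have e : α i = (shift^[1] α) i := (hag i (by omega))
            rw [shiftIter] at e
            rw [← e]
            exact ih (by omega)
        rw [htrue k le_rfl] at hkf
        exact absurd hkf (by simp)
    refine h2 ⟨h1, fun n => Or.inl (funext fun m => ?_)⟩
    rw [shiftIter, hal, hal]
  -- Claim C
  have claimC : ∀ j, 1 ≤ j → j < N →
      ∃ k, j + k < N ∧ (∀ i < k, α (j + i) = α i) ∧ α (j + k) = false ∧ α k = true := by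
    intro j hj1 hjN
    obtain ⟨k, hag, hlt⟩ := hmin j hj1 hjN
    have hag' : ∀ i < k, α (j + i) = α i := by
      intro i hi
      have := hag i hi
      rw [shiftIter] at this
      rw [add_comm]; exact this
    have hkb : α (j + k) = false ∧ α k = true := by
      have := hlt
      rw [shiftIter] at this
      rw [add_comm]
      exact boolLtIff.mp this
    refine ⟨k, ?_, hag', hkb.1, hkb.2⟩
    by_contra hge
    push_neg at hge
    rcases eq_or_lt_of_le hge with heq | hlt2
    · -- j + k = N
      have : lexLt (shift^[N] α) α := by
        refine ⟨0, fun i hi => absurd hi (Nat.not_lt_zero i), ?_⟩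
        rw [shiftIter]
        have e : 0 + N = j + k := by omega
        rw [e, hkb.1, h1]
        decide
      exact lexLt_not_lexLe this hNle
    · -- N < j + k
      set s := N - j with hs
      have hs1 : 1 ≤ s := by omega
      have hsN : s < N := by omega
      set t := k - s with ht
      have hst : s + t = k := by omega
      have hNt : N + t = j + k := by omega
      have h2lt : lexLt (shift^[N] α) (shift^[s] α) := by
        refine ⟨t, fun i hi => ?_, ?_⟩
        · rw [shiftIter, shiftIter]
          have e : i + N = j + (i + s) := by omega
          rw [e, hag' (i + s) (by omega), add_comm i s]
        · rw [shiftIter, shiftIter]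
          have e1 : t + N = j + k := by omega
          have e2 : t + s = k := by omega
          rw [e1, e2, hkb.1, hkb.2]
          decide
      exact lexLt_not_lexLe (lexLt_trans' h2lt (hmin s hs1 hsN)) hNle
  -- α (N-1) = 0
  have hαN1 : α (N - 1) = false := by
    obtain ⟨k, hkN, _, hkf, _⟩ := claimC (N - 1) (by omega) (by omega)
    have : k = 0 := by omega
    rw [this] at hkf
    simpa using hkf
  -- value of varsigma
  set β := varsigma α with hβdef
  have hβval : ∀ m, β m = α (m % N) := by
    intro m
    have hlen : ((List.ofFn fun i : Fin (nAlpha α - 1) => α i) ++ [false]).length = N := by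
      rw [List.length_append, List.length_ofFn, List.length_singleton]
      simp only [← hNdef]
      omega
    have hmlt : m % N < N := Nat.mod_lt _ (by omega)
    rw [hβdef]
    show perSeq ((List.ofFn fun i : Fin (nAlpha α - 1) => α i) ++ [false]) m = α (m % N)
    rw [perSeq, hlen]
    rw [List.getD_eq_getElem _ _ (by rw [hlen]; exact hmlt)]
    rcases lt_or_ge (m % N) (N - 1) with h | h
    · rw [List.getElem_append_left (by rw [List.length_ofFn]; simp only [← hNdef]; omega)]
      rw [List.getElem_ofFn]
    · have he : m % N = N - 1 := by omega
      rw [List.getElem_append_right (by rw [List.length_ofFn]; simp only [← hNdef]; omega)]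
      simp only [List.length_ofFn, ← hNdef, he]
      simp [hαN1]
  have hβ0 : β 0 = true := by
    rw [hβval]
    simpa using h1
  -- Parry β
  have hParry : Parry β := by
    refine ⟨hβ0, fun n => ?_⟩
    have hfun : shift^[n] β = fun m => α ((m + n) % N) := funext fun m => by
      rw [shiftIter, hβval]
    rcases Nat.eq_zero_or_pos (n % N) with hr | hr
    · left
      rw [hfun]
      funext m
      rw [hβval]
      obtain ⟨q, hq⟩ := Nat.dvd_of_mod_eq_zero hr
      rw [hq, Nat.add_mul_mod_self_left]
    · set r := n % N with hrdef
      have hrN : r < N := Nat.mod_lt _ (by omega)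
      obtain ⟨k, hkN, hag, hf, htk⟩ := claimC r hr hrN
      right
      rw [hfun]
      refine ⟨k, fun i hi => ?_, ?_⟩
      · show α ((i + n) % N) = β i
        have e1 : (i + n) % N = r + i := by
          rw [Nat.add_mod, ← hrdef, Nat.mod_eq_of_lt (by omega : i < N),
            Nat.mod_eq_of_lt (by omega : i + r < N)]
          omega
        rw [e1, hag i hi, hβval, Nat.mod_eq_of_lt (by omega : i < N)]
      · show α ((k + n) % N) < β k
        have e1 : (k + n) % N = r + k := by
          rw [Nat.add_mod, ← hrdef, Nat.mod_eq_of_lt (by omega : k < N),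
            Nat.mod_eq_of_lt (by omega : k + r < N)]
          omega
        rw [e1, hf, hβval, Nat.mod_eq_of_lt (by omega : k < N), htk]
        decide
  -- β ≤ α
  have hNfun : shift^[N] α = fun t => α (t + N) := funext fun t => shiftIter N α t
  have hβle : lexLe β α := by
    by_contra hc
    obtain ⟨k, hag, hklt⟩ := lexLt_of_not_lexLe hc
    have hkb : α k = false ∧ β k = true := boolLtIff.mp hklt
    have hkN : N ≤ k := by
      by_contra hk
      push_neg at hk
      have hbk : β k = α k := by rw [hβval, Nat.mod_eq_of_lt hk]
      rw [hbk, hkb.1] at hkb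
      exact absurd hkb.2 (by simp)
    set m := k / N with hm
    set j := k % N with hj
    have hdm : N * m + j = k := Nat.div_add_mod k N
    have hm1 : 1 ≤ m := (Nat.one_le_div_iff (by omega)).mpr hkN
    have hjN : j < N := Nat.mod_lt _ (by omega)
    have hpre : ∀ i < k, α i = α (i % N) := fun i hi => by
      rw [hag i hi, hβval]
    have hMono : ∀ r, r ≤ m → lexLe α (fun t => α (t + N * r)) := by
      intro r
      induction r with
      | zero => intro _; exact Or.inl (funext fun t => by simp)
      | succ r ih =>
        intro hr
        have ih' := ih (by omega)
        have hagN : ∀ i < N, α i = α (i + N * r) := by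
          intro i hiN
          have hlt2 : i + N * r < k := by
            have h1' : N * (r + 1) ≤ N * m := Nat.mul_le_mul_left _ (by omega)
            have h2' : i + N * r < N * (r + 1) := by
              rw [Nat.mul_succ]; omega
            omega
          rw [hpre _ hlt2, Nat.add_mul_mod_self_left, Nat.mod_eq_of_lt hiN]
        have hstep := lexLe_shiftN N ih' hagN
        have hNle' : lexLe α (fun t => α (t + N)) := hNfun ▸ hNle
        have hfin := lexLe_trans' hNle' hstep
        have he : (fun t => (fun t => α (t + N * r)) (t + N)) = fun t => α (t + N * (r + 1)) := by
          funext t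
          show α (t + N + N * r) = α (t + N * (r + 1))
          congr 1
          rw [Nat.mul_succ]
          omega
        rw [he] at hfin
        exact hfin
    have hMm := hMono m le_rfl
    have hcon : lexLt (fun t => α (t + N * m)) α := by
      refine ⟨j, fun t ht => ?_, ?_⟩
      · show α (t + N * m) = α t
        have h1' : t + N * m < k := by omega
        rw [hpre _ h1', Nat.add_mul_mod_self_left, Nat.mod_eq_of_lt (by omega : t < N)]
      · show α (j + N * m) < α j
        have e : j + N * m = k := by omega
        have hαj : α j = true := by
          have := hβval k
          rw [← hj] at this
          rw [← this]
          exact hkb.2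
        rw [e, hkb.1, hαj]
        decide
    exact lexLt_not_lexLe hcon hMm
  refine ⟨hParry, ?_⟩
  ext x
  simp only [Set.mem_setOf_eq]
  constructor
  · intro hx n
    by_contra hc
    obtain ⟨k, hag, hklt⟩ := lexLt_of_not_lexLe hc
    have hkb : β k = false ∧ (shift^[n] x) k = true := boolLtIff.mp hklt
    set m := k / N with hm
    set j := k % N with hj
    have hdm : N * m + j = k := Nat.div_add_mod k N
    have hjN : j < N := Nat.mod_lt _ (by omega)
    have hαj : α j = false := by
      have := hβval k
      rw [← hj] at this
      rw [← this]
      exact hkb.1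
    have key : lexLt α (shift^[N * m + n] x) := by
      refine ⟨j, fun t ht => ?_, ?_⟩
      · show α t = (shift^[N * m + n] x) t
        have e : (shift^[N * m + n] x) t = (shift^[n] x) (t + N * m) := by
          rw [shiftIter, shiftIter]
          congr 1
          omega
        rw [e, ← hag (t + N * m) (by omega), hβval, Nat.add_mul_mod_self_left,
          Nat.mod_eq_of_lt (by omega : t < N)]
      · show α j < (shift^[N * m + n] x) j
        have e : (shift^[N * m + n] x) j = (shift^[n] x) (j + N * m) := by
          rw [shiftIter, shiftIter]
          congr 1
          omega
        rw [e, show j + N * m = k by omega, hkb.2, hαj]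
        decide
    exact lexLt_not_lexLe key (hx (N * m + n))
  · intro hx n
    exact lexLe_trans' (hx n) hβle
end
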